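/- Let n be a natural number and N = 2n + 1. Let A be the unital associative ℝ-algebra presented by generators x_0, …, x_{N−1} subject to the relations: x_i² = 1 for all i; x_{2k}·x_{2k+1} = −x_{2k+1}·x_{2k} for every 0 ≤ k < n; x_{N−1} commutes with every generator; and x_i·x_j = x_j·x_i for every other pair i ≠ j among the first 2n generators (i.e., whenever {i,j} ⊆ {0,…,2n−1} is not of the form {2k, 2k+1}). Then A is isomorphic, as an ℝ-algebra, to the product algebra M_{2^n}(ℝ) × M_{2^n}(ℝ). (This algebra A is the twisted group algebra 𝒜_ℝ(μ_0^{2n+1}) attached to the quadratic form q_0^{2n+1}(x) = x_1x_2 + ⋯ + x_{2n−1}x_{2n} over the field of two elements.) -/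

import Mathlib

/-- The relations presenting the twisted group algebra `𝒜_ℝ(μ₀^{2n+1})`:
generators `x_i` (`i : Fin (2n+1)`) with `x_i² = 1`,
`x_{2k} x_{2k+1} = - x_{2k+1} x_{2k}` for `k < n`, the last generator `x_{2n}`
commuting with every generator, and `x_i x_j = x_j x_i` for every other pair `i ≠ j`
among the first `2n` generators. -/
inductive Rel12 (n : ℕ) :
    FreeAlgebra ℝ (Fin (2 * n + 1)) → FreeAlgebra ℝ (Fin (2 * n + 1)) → Prop
  | sq (i : Fin (2 * n + 1)) :
      Rel12 n (FreeAlgebra.ι ℝ i * FreeAlgebra.ι ℝ i) 1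
  | anti (k : ℕ) (hk : k < n) :
      Rel12 n
        (FreeAlgebra.ι ℝ (⟨2 * k, by omega⟩ : Fin (2 * n + 1)) *
          FreeAlgebra.ι ℝ (⟨2 * k + 1, by omega⟩ : Fin (2 * n + 1)))
        (-(FreeAlgebra.ι ℝ (⟨2 * k + 1, by omega⟩ : Fin (2 * n + 1)) *
          FreeAlgebra.ι ℝ (⟨2 * k, by omega⟩ : Fin (2 * n + 1))))
  | commLast (i : Fin (2 * n + 1)) :
      Rel12 n
        (FreeAlgebra.ι ℝ (⟨2 * n, by omega⟩ : Fin (2 * n + 1)) * FreeAlgebra.ι ℝ i)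
        (FreeAlgebra.ι ℝ i * FreeAlgebra.ι ℝ (⟨2 * n, by omega⟩ : Fin (2 * n + 1)))
  | comm (i j : Fin (2 * n + 1)) (hij : i ≠ j)
      (hi : (i : ℕ) < 2 * n) (hj : (j : ℕ) < 2 * n)
      (h : ¬∃ k : ℕ, ((i : ℕ) = 2 * k ∧ (j : ℕ) = 2 * k + 1) ∨
        ((i : ℕ) = 2 * k + 1 ∧ (j : ℕ) = 2 * k)) :
      Rel12 n (FreeAlgebra.ι ℝ i * FreeAlgebra.ι ℝ j) (FreeAlgebra.ι ℝ j * FreeAlgebra.ι ℝ i)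


open Matrix

namespace Tw12
variable {n : ℕ}

abbrev V (n : ℕ) := Fin n → Bool

def flip (k : Fin n) (a : V n) : V n := Function.update a k (!(a k))

lemma flip_apply_self (k : Fin n) (a : V n) : flip k a k = !(a k) := by
  simp [flip]

lemma flip_apply_ne (k l : Fin n) (a : V n) (h : l ≠ k) : flip k a l = a l := by
  simp [flip, Function.update_of_ne h]

lemma flip_flip (k : Fin n) (a : V n) : flip k (flip k a) = a := by
  funext l
  by_cases h : l = k
  · subst h; simp [flip_apply_self]
  · rw [flip_apply_ne _ _ _ h, flip_apply_ne _ _ _ h]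

lemma eq_flip_iff (k : Fin n) (a b : V n) : a = flip k b ↔ b = flip k a := by
  constructor <;> (rintro rfl; rw [flip_flip])

lemma flip_comm (k l : Fin n) (a : V n) : flip k (flip l a) = flip l (flip k a) := by
  by_cases h : k = l
  · subst h; rfl
  · funext m
    by_cases hm : m = k
    · subst hm
      rw [flip_apply_self, flip_apply_ne _ _ _ h, flip_apply_ne _ _ _ h, flip_apply_self]
    · rw [flip_apply_ne _ _ _ hm]
      by_cases hm' : m = l
      · subst hm'
        rw [flip_apply_self, flip_apply_self, flip_apply_ne _ _ _ hm]
      · rw [flip_apply_ne _ _ _ hm', flip_apply_ne _ _ _ hm', flip_apply_ne _ _ _ hm]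

def XM (k : Fin n) : Matrix (V n) (V n) ℝ :=
  Matrix.of fun a b => if a = flip k b then 1 else 0

def ZM (k : Fin n) : Matrix (V n) (V n) ℝ :=
  Matrix.diagonal fun a => if a k then -1 else 1

lemma XM_mul_apply (k : Fin n) (M : Matrix (V n) (V n) ℝ) (a b : V n) :
    (XM k * M) a b = M (flip k a) b := by
  rw [Matrix.mul_apply]
  have : ∀ c, (XM k a c) * M c b = if c = flip k a then M c b else 0 := by
    intro c
    rw [XM]
    simp only [Matrix.of_apply, eq_flip_iff k a c]
    split <;> simp
  simp_rw [this]
  simp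

lemma mul_XM_apply (k : Fin n) (M : Matrix (V n) (V n) ℝ) (a b : V n) :
    (M * XM k) a b = M a (flip k b) := by
  rw [Matrix.mul_apply]
  have : ∀ c, M a c * (XM k c b) = if c = flip k b then M a c else 0 := by
    intro c
    rw [XM]
    simp only [Matrix.of_apply]
    split <;> simp
  simp_rw [this]
  simp

lemma XM_mul_self (k : Fin n) : XM k * XM k = 1 := by
  ext a b
  rw [XM_mul_apply, XM]
  simp [eq_flip_iff, flip_flip, Matrix.one_apply, eq_comm]

lemma ZM_mul_self (k : Fin n) : ZM k * ZM k = 1 := by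
  rw [ZM, Matrix.diagonal_mul_diagonal]
  have : (fun a : V n => (if a k then (-1:ℝ) else 1) * (if a k then -1 else 1)) = fun _ => (1:ℝ) := by
    funext a; by_cases h : a k <;> simp [h]
  rw [this, Matrix.diagonal_one]

lemma XM_comm (k l : Fin n) : XM k * XM l = XM l * XM k := by
  ext a b
  rw [XM_mul_apply, XM_mul_apply, XM, XM]
  simp only [Matrix.of_apply, eq_flip_iff]
  rw [flip_comm]

lemma ZM_comm (k l : Fin n) : ZM k * ZM l = ZM l * ZM k := by
  rw [ZM, ZM, Matrix.diagonal_mul_diagonal, Matrix.diagonal_mul_diagonal]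
  have : (fun i : V n => (if i k then (-1:ℝ) else 1) * (if i l then -1 else 1))
      = fun i : V n => (if i l then (-1:ℝ) else 1) * (if i k then -1 else 1) := by
    funext i; ring
  rw [this]

lemma XM_ZM_comm (k l : Fin n) (h : k ≠ l) : XM k * ZM l = ZM l * XM k := by
  ext a b
  rw [ZM, Matrix.mul_diagonal, Matrix.diagonal_mul, XM]
  simp only [Matrix.of_apply]
  by_cases hab : a = flip k b
  · subst hab
    simp [flip_apply_ne _ _ _ (Ne.symm h), mul_comm]
  · simp [hab]

lemma XM_ZM_anti (k : Fin n) : XM k * ZM k = -(ZM k * XM k) := by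
  ext a b
  rw [ZM, Matrix.mul_diagonal, Matrix.neg_apply, Matrix.diagonal_mul, XM]
  simp only [Matrix.of_apply]
  by_cases hab : a = flip k b
  · subst hab
    rw [flip_apply_self]
    by_cases h : b k <;> simp [h]
  · simp [hab]


def Gens (n : ℕ) : Set (Matrix (V n) (V n) ℝ) := Set.range XM ∪ Set.range ZM

def flipS (S : Finset (Fin n)) (b : V n) : V n := fun k => if k ∈ S then !(b k) else b k

lemma flipS_flipS (S : Finset (Fin n)) (b : V n) : flipS S (flipS S b) = b := by
  funext k
  by_cases h : k ∈ S <;> simp [flipS, h]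

lemma flip_flipS (k : Fin n) (S : Finset (Fin n)) (hk : k ∉ S) (b : V n) :
    flip k (flipS S b) = flipS (insert k S) b := by
  funext m
  by_cases hm : m = k
  · subst hm
    simp [flip, flipS, hk, Function.update_self]
  · rw [flip, Function.update_of_ne hm]
    simp [flipS, hm, Finset.mem_insert]

lemma fac_eq (f : V n) (k : Fin n) :
    (1/2 : ℝ) • (1 + (if f k then (-1:ℝ) else 1) • ZM k) =
      Matrix.diagonal (fun a => if a k = f k then (1:ℝ) else 0) := by
  ext a b
  rcases eq_or_ne a b with rfl | hab
  · by_cases hf : f k <;> by_cases ha : a k <;>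
      simp [hf, ha, ZM, Matrix.smul_apply, Matrix.add_apply, Matrix.one_apply_eq,
        Matrix.diagonal_apply_eq] <;> norm_num
  · by_cases hf : f k <;>
      simp [hf, ZM, Matrix.smul_apply, Matrix.add_apply, Matrix.one_apply_ne hab,
        Matrix.diagonal_apply_ne _ hab]

lemma Pdiag_mem (f : V n) (S : Finset (Fin n)) :
    Matrix.diagonal (fun a => if ∀ k ∈ S, a k = f k then (1:ℝ) else 0)
      ∈ Algebra.adjoin ℝ (Gens n) := by
  classical
  induction S using Finset.induction_on with
  | empty =>
    have : (fun a : V n => if ∀ k ∈ (∅ : Finset (Fin n)), a k = f k then (1:ℝ) else 0)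
        = fun _ => (1:ℝ) := by
      funext a; simp
    rw [this, Matrix.diagonal_one]
    exact Subalgebra.one_mem _
  | @insert k S' hk ih =>
    have key : Matrix.diagonal (fun a => if ∀ m ∈ insert k S', a m = f m then (1:ℝ) else 0)
        = ((1/2 : ℝ) • (1 + (if f k then (-1:ℝ) else 1) • ZM k)) *
          Matrix.diagonal (fun a => if ∀ m ∈ S', a m = f m then (1:ℝ) else 0) := by
      rw [fac_eq, Matrix.diagonal_mul_diagonal]
      have : (fun a : V n => if ∀ m ∈ insert k S', a m = f m then (1:ℝ) else 0)
          = fun a : V n => (if a k = f k then (1:ℝ) else 0) *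
              if ∀ m ∈ S', a m = f m then (1:ℝ) else 0 := by
        funext a
        simp only [Finset.forall_mem_insert]
        by_cases h1 : a k = f k <;> by_cases h2 : ∀ m ∈ S', a m = f m <;>
          simp [h1, h2]
      rw [this]
    rw [key]
    apply Subalgebra.mul_mem
    · apply Subalgebra.smul_mem
      apply Subalgebra.add_mem
      · exact Subalgebra.one_mem _
      · apply Subalgebra.smul_mem
        exact Algebra.subset_adjoin (Or.inr ⟨k, rfl⟩)
    · exact ih

lemma Pf_mem (f : V n) :
    Matrix.diagonal (fun a => if a = f then (1:ℝ) else 0) ∈ Algebra.adjoin ℝ (Gens n) := by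
  have : (fun a : V n => if a = f then (1:ℝ) else 0)
      = fun a => if ∀ k ∈ Finset.univ, a k = f k then (1:ℝ) else 0 := by
    funext a
    congr 1
    simp only [Finset.mem_univ, true_implies, eq_iff_iff]
    constructor
    · rintro rfl; intro k; rfl
    · intro h; funext k; exact h k
  rw [this]
  exact Pdiag_mem f Finset.univ

lemma Xprod_mem (S : Finset (Fin n)) :
    ∃ Q ∈ Algebra.adjoin ℝ (Gens n), ∀ a b : V n,
      Q a b = if a = flipS S b then 1 else 0 := by
  classical
  induction S using Finset.induction_on with
  | empty =>
    refine ⟨1, Subalgebra.one_mem _, fun a b => ?_⟩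
    have : flipS (∅ : Finset (Fin n)) b = b := by funext k; simp [flipS]
    rw [this, Matrix.one_apply]
  | @insert k S' hk ih =>
    obtain ⟨Q, hQ, hQab⟩ := ih
    refine ⟨XM k * Q, Subalgebra.mul_mem _ (Algebra.subset_adjoin (Or.inl ⟨k, rfl⟩)) hQ,
      fun a b => ?_⟩
    rw [XM_mul_apply, hQab, ← flip_flipS k S' hk]
    congr 1
    rw [eq_iff_iff, eq_flip_iff, eq_comm]

lemma std_mem (f g : V n) :
    Matrix.single f g (1:ℝ) ∈ Algebra.adjoin ℝ (Gens n) := by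
  classical
  obtain ⟨Q, hQ, hQab⟩ := Xprod_mem (n := n) (Finset.univ.filter (fun k => f k ≠ g k))
  set D : Finset (Fin n) := Finset.univ.filter (fun k => f k ≠ g k) with hD
  have hfg : flipS D g = f := by
    funext k
    by_cases h : f k = g k
    · simp [flipS, hD, h]
    · have hm : k ∈ D := by simp [hD, h]
      simp only [flipS, hm, if_pos]
      cases hfk : f k <;> cases hgk : g k <;> simp_all
  have hgf : flipS D f = g := by rw [← hfg, flipS_flipS]
  have hfb : ∀ b, (f = flipS D b) ↔ b = g := by
    intro b
    constructor
    · intro h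
      rw [← flipS_flipS D b, ← h, hgf]
    · rintro rfl; rw [hfg]
  have entry : ∀ a b, Matrix.single f g (1:ℝ) a b
      = if a = f ∧ b = g then 1 else 0 := by
    intro a b
    show (if f = a ∧ g = b then (1:ℝ) else 0) = _
    rcases eq_or_ne a f with rfl | h1 <;> rcases eq_or_ne b g with rfl | h2
    · simp
    · simp [h2, Ne.symm h2]
    · simp [h1, Ne.symm h1]
    · simp [h1, h2, Ne.symm h1, Ne.symm h2]
  have key : Matrix.single f g (1:ℝ) =
      Matrix.diagonal (fun a => if a = f then (1:ℝ) else 0) * Q := by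
    ext a b
    rw [Matrix.diagonal_mul, hQab, entry]
    by_cases haf : a = f
    · rw [if_pos haf, one_mul, haf]
      simp [hfb b]
    · simp [haf]
  rw [key]
  exact Subalgebra.mul_mem _ (Pf_mem f) hQ

lemma adjoin_gens_eq_top : Algebra.adjoin ℝ (Gens n) = ⊤ := by
  rw [eq_top_iff]
  intro M _
  rw [Matrix.matrix_eq_sum_single M]
  apply Subalgebra.sum_mem
  intro i _
  apply Subalgebra.sum_mem
  intro j _
  have : Matrix.single i j (M i j) = (M i j) • Matrix.single i j (1:ℝ) := by
    rw [Matrix.smul_single, smul_eq_mul, mul_one]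
  rw [this]
  exact Subalgebra.smul_mem _ (std_mem i j) _


abbrev TT (n : ℕ) := Matrix (V n) (V n) ℝ × Matrix (V n) (V n) ℝ

noncomputable def genT (n : ℕ) (i : Fin (2 * n + 1)) : TT n :=
  if h : (i : ℕ) < 2 * n then
    if (i : ℕ) % 2 = 0 then
      (XM ⟨(i : ℕ) / 2, by omega⟩, XM ⟨(i : ℕ) / 2, by omega⟩)
    else (ZM ⟨(i : ℕ) / 2, by omega⟩, ZM ⟨(i : ℕ) / 2, by omega⟩)
  else (1, -1)

lemma last_central (p : TT n) : ((1, -1) : TT n) * p = p * ((1, -1) : TT n) := by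
  cases p with
  | mk a b => simp [Prod.ext_iff]

lemma genT_even (k : ℕ) (hk : k < n) (h : 2 * k < 2 * n + 1) :
    genT n ⟨2 * k, h⟩ = (XM ⟨k, hk⟩, XM ⟨k, hk⟩) := by
  have e : (⟨2 * k / 2, by omega⟩ : Fin n) = ⟨k, hk⟩ := by
    apply Fin.ext
    show 2 * k / 2 = k
    omega
  rw [genT, dif_pos (show 2 * k < 2 * n by omega), if_pos (show 2 * k % 2 = 0 by omega), e]

lemma genT_odd (k : ℕ) (hk : k < n) (h : 2 * k + 1 < 2 * n + 1) :
    genT n ⟨2 * k + 1, h⟩ = (ZM ⟨k, hk⟩, ZM ⟨k, hk⟩) := by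
  have e : (⟨(2 * k + 1) / 2, by omega⟩ : Fin n) = ⟨k, hk⟩ := by
    apply Fin.ext
    show (2 * k + 1) / 2 = k
    omega
  rw [genT, dif_pos (show 2 * k + 1 < 2 * n by omega),
    if_neg (show ¬(2 * k + 1) % 2 = 0 by omega), e]

lemma genT_last (h : 2 * n < 2 * n + 1) : genT n ⟨2 * n, h⟩ = (1, -1) := by
  rw [genT, dif_neg (show ¬2 * n < 2 * n by omega)]

lemma genT_sq (i : Fin (2 * n + 1)) : genT n i * genT n i = 1 := by
  rw [genT]
  by_cases h : (i : ℕ) < 2 * n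
  · rw [dif_pos h]
    by_cases hp : (i : ℕ) % 2 = 0
    · rw [if_pos hp]
      simp [Prod.ext_iff, XM_mul_self]
    · rw [if_neg hp]
      simp [Prod.ext_iff, ZM_mul_self]
  · rw [dif_neg h]
    simp [Prod.ext_iff]

noncomputable def phi0 (n : ℕ) : FreeAlgebra ℝ (Fin (2 * n + 1)) →ₐ[ℝ] TT n :=
  FreeAlgebra.lift ℝ (genT n)

lemma rel_preserved : ∀ ⦃x y⦄, Rel12 n x y → phi0 n x = phi0 n y := by
  intro x y hxy
  induction hxy with
  | sq i => simp [phi0, _root_.map_mul, genT_sq]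
  | anti k hk =>
    simp only [phi0, _root_.map_mul, map_neg, FreeAlgebra.lift_ι_apply]
    rw [genT_even k hk, genT_odd k hk]
    simp [Prod.ext_iff, XM_ZM_anti]
  | commLast i =>
    simp only [phi0, _root_.map_mul, FreeAlgebra.lift_ι_apply]
    rw [genT_last, last_central]
  | comm i j hij hi hj h =>
    simp only [phi0, _root_.map_mul, FreeAlgebra.lift_ι_apply]
    simp only [genT]
    rw [dif_pos hi, dif_pos hj]
    by_cases pi : (i : ℕ) % 2 = 0 <;> by_cases pj : (j : ℕ) % 2 = 0
    · rw [if_pos pi, if_pos pj]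
      simp [Prod.ext_iff, XM_comm]
    · rw [if_pos pi, if_neg pj]
      have hne : (⟨(i : ℕ) / 2, by omega⟩ : Fin n) ≠ ⟨(j : ℕ) / 2, by omega⟩ := by
        intro e
        rw [Fin.mk.injEq] at e
        exact h ⟨(i : ℕ) / 2, Or.inl ⟨by omega, by omega⟩⟩
      simp [Prod.ext_iff, XM_ZM_comm _ _ hne]
    · rw [if_neg pi, if_pos pj]
      have hne : (⟨(j : ℕ) / 2, by omega⟩ : Fin n) ≠ ⟨(i : ℕ) / 2, by omega⟩ := by
        intro e
        rw [Fin.mk.injEq] at e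
        exact h ⟨(j : ℕ) / 2, Or.inr ⟨by omega, by omega⟩⟩
      simp [Prod.ext_iff, ← XM_ZM_comm _ _ hne]
    · rw [if_neg pi, if_neg pj]
      simp [Prod.ext_iff, ZM_comm]


-- Quotient algebra side
noncomputable def phiA (n : ℕ) : RingQuot (Rel12 n) →ₐ[ℝ] TT n :=
  RingQuot.liftAlgHom ℝ ⟨phi0 n, rel_preserved⟩

noncomputable def g (n : ℕ) (i : Fin (2 * n + 1)) : RingQuot (Rel12 n) :=
  RingQuot.mkAlgHom ℝ (Rel12 n) (FreeAlgebra.ι ℝ i)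

lemma phiA_g (i : Fin (2 * n + 1)) : phiA n (g n i) = genT n i := by
  rw [phiA, g, RingQuot.liftAlgHom_mkAlgHom_apply, phi0, FreeAlgebra.lift_ι_apply]

lemma g_sq (i : Fin (2 * n + 1)) : g n i * g n i = 1 := by
  rw [g, ← _root_.map_mul, ← _root_.map_one (RingQuot.mkAlgHom ℝ (Rel12 n))]
  exact RingQuot.mkAlgHom_rel ℝ (Rel12.sq i)

lemma neg_one_smul' (x : RingQuot (Rel12 n)) : (-1 : ℝ) • x = -x := by
  rw [Algebra.smul_def, map_neg, _root_.map_one,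
    show (-1 : RingQuot (Rel12 n)) * x = -(1 * x) from neg_mul 1 x, one_mul]

lemma g_swap (i j : Fin (2 * n + 1)) (hij : i ≠ j) :
    ∃ c : ℝ, g n i * g n j = c • (g n j * g n i) := by
  classical
  by_cases hi' : (i : ℕ) = 2 * n
  · refine ⟨1, ?_⟩
    rw [one_smul]
    have : i = ⟨2 * n, by omega⟩ := Fin.ext hi'
    rw [this]
    rw [g, g, ← _root_.map_mul, ← _root_.map_mul]
    exact RingQuot.mkAlgHom_rel ℝ (Rel12.commLast j)
  · by_cases hj' : (j : ℕ) = 2 * n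
    · refine ⟨1, ?_⟩
      rw [one_smul]
      have : j = ⟨2 * n, by omega⟩ := Fin.ext hj'
      rw [this]
      rw [g, g, ← _root_.map_mul, ← _root_.map_mul]
      exact (RingQuot.mkAlgHom_rel ℝ (Rel12.commLast i)).symm
    · have hi : (i : ℕ) < 2 * n := by have := i.isLt; omega
      have hj : (j : ℕ) < 2 * n := by have := j.isLt; omega
      by_cases hp : ∃ k : ℕ, ((i : ℕ) = 2 * k ∧ (j : ℕ) = 2 * k + 1) ∨
          ((i : ℕ) = 2 * k + 1 ∧ (j : ℕ) = 2 * k)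
      · obtain ⟨k, hk⟩ := hp
        have hkn : k < n := by omega
        have key := RingQuot.mkAlgHom_rel ℝ (Rel12.anti k hkn)
        rw [_root_.map_mul, map_neg, _root_.map_mul] at key
        rcases hk with ⟨hik, hjk⟩ | ⟨hik, hjk⟩
        · have e1 : (⟨2 * k, by omega⟩ : Fin (2 * n + 1)) = i := (Fin.ext hik).symm
          have e2 : (⟨2 * k + 1, by omega⟩ : Fin (2 * n + 1)) = j := (Fin.ext hjk).symm
          rw [e1, e2] at key
          exact ⟨-1, by rw [neg_one_smul', g, g, key]⟩
        · have e1 : (⟨2 * k + 1, by omega⟩ : Fin (2 * n + 1)) = i := (Fin.ext hik).symm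
          have e2 : (⟨2 * k, by omega⟩ : Fin (2 * n + 1)) = j := (Fin.ext hjk).symm
          rw [e1, e2] at key
          refine ⟨-1, ?_⟩
          rw [neg_one_smul', g, g, key, neg_neg]
      · refine ⟨1, ?_⟩
        rw [one_smul, g, g, ← _root_.map_mul, ← _root_.map_mul]
        exact RingQuot.mkAlgHom_rel ℝ (Rel12.comm i j hij hi hj hp)

lemma mul_mono (i : Fin (2 * n + 1)) :
    ∀ l : List (Fin (2 * n + 1)), l.Pairwise (· < ·) →
      ∃ (c : ℝ) (l' : List (Fin (2 * n + 1))), l'.Pairwise (· < ·) ∧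
        (∀ x ∈ l', x = i ∨ x ∈ l) ∧
        g n i * (l.map (g n)).prod = c • (l'.map (g n)).prod := by
  intro l
  induction l generalizing i with
  | nil =>
    intro _
    exact ⟨1, [i], List.pairwise_singleton _ i, by simp, by simp⟩
  | cons j t ih =>
    intro hl
    rw [List.pairwise_cons] at hl
    obtain ⟨hjt, ht⟩ := hl
    rcases lt_trichotomy i j with hij | hij | hij
    · refine ⟨1, i :: j :: t, ?_, ?_, by simp⟩
      · rw [List.pairwise_cons]
        refine ⟨?_, List.pairwise_cons.mpr ⟨hjt, ht⟩⟩
        intro b hb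
        rcases List.mem_cons.mp hb with rfl | hb
        · exact hij
        · exact hij.trans (hjt b hb)
      · intro x hx
        rcases List.mem_cons.mp hx with rfl | hx
        · exact Or.inl rfl
        · exact Or.inr hx
    · subst hij
      refine ⟨1, t, ht, fun x hx => Or.inr (List.mem_cons_of_mem _ hx), ?_⟩
      rw [List.map_cons, List.prod_cons, ← mul_assoc, g_sq, one_mul, one_smul]
    · obtain ⟨c₀, hc₀⟩ := g_swap i j (by exact fun h => absurd h.symm (ne_of_lt hij))
      obtain ⟨c, t', ht', hsub, heq⟩ := ih i ht
      refine ⟨c₀ * c, j :: t', ?_, ?_, ?_⟩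
      · rw [List.pairwise_cons]
        refine ⟨?_, ht'⟩
        intro b hb
        rcases hsub b hb with rfl | hb
        · exact hij
        · exact hjt b hb
      · intro x hx
        rcases List.mem_cons.mp hx with rfl | hx
        · exact Or.inr (List.mem_cons_self)
        · rcases hsub x hx with rfl | h
          · exact Or.inl rfl
          · exact Or.inr (List.mem_cons_of_mem _ h)
      · rw [List.map_cons, List.prod_cons, ← mul_assoc, hc₀, smul_mul_assoc,
          mul_assoc, heq, mul_smul_comm, List.map_cons, List.prod_cons, smul_smul]

def Mono (n : ℕ) : Set (RingQuot (Rel12 n)) :=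
  {x | ∃ l : List (Fin (2 * n + 1)), l.Pairwise (· < ·) ∧ x = (l.map (g n)).prod}

lemma adjoin_range_g : Algebra.adjoin ℝ (Set.range (g n)) = ⊤ := by
  have h1 : Subalgebra.map (RingQuot.mkAlgHom ℝ (Rel12 n))
      (Algebra.adjoin ℝ (Set.range (FreeAlgebra.ι ℝ))) = Algebra.adjoin ℝ (Set.range (g n)) := by
    rw [AlgHom.map_adjoin, ← Set.range_comp]
    rfl
  rw [← h1, FreeAlgebra.adjoin_range_ι, Algebra.map_top,
    AlgHom.range_eq_top]
  exact RingQuot.mkAlgHom_surjective ℝ (Rel12 n)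

lemma span_mono_eq_top : Submodule.span ℝ (Mono n) = ⊤ := by
  rw [eq_top_iff]
  intro a _
  have gmul : ∀ (i : Fin (2 * n + 1)) (x : RingQuot (Rel12 n)),
      x ∈ Submodule.span ℝ (Mono n) → g n i * x ∈ Submodule.span ℝ (Mono n) := by
    intro i x hx
    induction hx using Submodule.span_induction with
    | mem y hy =>
      obtain ⟨l, hl, rfl⟩ := hy
      obtain ⟨c, l', hl', _, heq⟩ := mul_mono i l hl
      rw [heq]
      exact Submodule.smul_mem _ _ (Submodule.subset_span ⟨l', hl', rfl⟩)
    | zero => rw [mul_zero]; exact Submodule.zero_mem _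
    | add y z _ _ hy hz => rw [mul_add]; exact Submodule.add_mem _ hy hz
    | smul r y _ hy => rw [mul_smul_comm]; exact Submodule.smul_mem _ _ hy
  have key : ∀ b : RingQuot (Rel12 n), ∀ x ∈ Submodule.span ℝ (Mono n),
      b * x ∈ Submodule.span ℝ (Mono n) := by
    intro b
    have hb : b ∈ Algebra.adjoin ℝ (Set.range (g n)) := by
      rw [adjoin_range_g]; trivial
    induction hb using Algebra.adjoin_induction with
    | mem y hy =>
      obtain ⟨i, rfl⟩ := hy
      exact gmul i
    | algebraMap r =>
      intro x hx
      rw [Algebra.algebraMap_eq_smul_one, smul_mul_assoc, one_mul]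
      exact Submodule.smul_mem _ _ hx
    | add y z _ _ hy hz =>
      intro x hx
      rw [add_mul]
      exact Submodule.add_mem _ (hy x hx) (hz x hx)
    | mul y z _ _ hy hz =>
      intro x hx
      rw [mul_assoc]
      exact hy _ (hz x hx)
  have h1 : (1 : RingQuot (Rel12 n)) ∈ Submodule.span ℝ (Mono n) :=
    Submodule.subset_span ⟨[], List.Pairwise.nil, by simp⟩
  simpa using key a 1 h1

noncomputable def monoF (n : ℕ) (s : Finset (Fin (2 * n + 1))) : RingQuot (Rel12 n) :=
  ((s.sort (· ≤ ·)).map (g n)).prod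

noncomputable def monoFin (n : ℕ) : Finset (RingQuot (Rel12 n)) :=
  @Finset.image _ _ (Classical.decEq _) (monoF n) Finset.univ

lemma mono_subset_image : Mono n ⊆ ↑(monoFin n) := by
  rintro x ⟨l, hl, rfl⟩
  have : monoF n l.toFinset = (l.map (g n)).prod := by
    rw [monoF, (List.toFinset_sort (α := Fin (2 * n + 1)) (· ≤ ·) (hl.imp ne_of_lt)).mpr (hl.imp le_of_lt)]
  rw [← this]
  exact Finset.mem_coe.mpr ((@Finset.mem_image _ _ (Classical.decEq _) _ _ _).mpr
    ⟨l.toFinset, Finset.mem_univ _, rfl⟩)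

lemma span_monoFin_eq_top :
    Submodule.span ℝ ((monoFin n : Finset (RingQuot (Rel12 n))) :
      Set (RingQuot (Rel12 n))) = ⊤ := by
  rw [eq_top_iff, ← span_mono_eq_top]
  exact Submodule.span_mono mono_subset_image

lemma monoFin_card_le : (monoFin n).card ≤ 2 ^ (2 * n + 1) := by
  refine le_trans (@Finset.card_image_le _ _ _ _ (Classical.decEq _)) ?_
  rw [Finset.card_univ, Fintype.card_finset, Fintype.card_fin]

instance : Module.Finite ℝ (RingQuot (Rel12 n)) :=
  ⟨⟨monoFin n, span_monoFin_eq_top⟩⟩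

lemma finrank_le : Module.finrank ℝ (RingQuot (Rel12 n)) ≤ 2 ^ (2 * n + 1) := by
  have h := finrank_span_finset_le_card (R := ℝ) (monoFin n)
  rw [Set.finrank, span_monoFin_eq_top, finrank_top] at h
  exact le_trans h monoFin_card_le


lemma finrank_TT : Module.finrank ℝ (TT n) = 2 ^ (2 * n + 1) := by
  have hV : Fintype.card (V n) = 2 ^ n := by
    simp [Fintype.card_fun]
  have hM : Module.finrank ℝ (Matrix (V n) (V n) ℝ) = 2 ^ n * 2 ^ n := by
    rw [Module.finrank_matrix, Module.finrank_self, hV, mul_one]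
  rw [Module.finrank_prod, hM, pow_succ, two_mul n, pow_add]
  ring

lemma phiA_surjective : Function.Surjective (phiA n) := by
  rw [← AlgHom.range_eq_top, eq_top_iff]
  have hXk : ∀ k : Fin n, ((XM k, XM k) : TT n) ∈ (phiA n).range := by
    intro k
    refine ⟨g n ⟨2 * (k : ℕ), by omega⟩, ?_⟩
    show phiA n _ = _
    rw [phiA_g, genT_even (k : ℕ) k.isLt, Fin.eta]
  have hZk : ∀ k : Fin n, ((ZM k, ZM k) : TT n) ∈ (phiA n).range := by
    intro k
    refine ⟨g n ⟨2 * (k : ℕ) + 1, by omega⟩, ?_⟩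
    show phiA n _ = _
    rw [phiA_g, genT_odd (k : ℕ) k.isLt, Fin.eta]
  have hdiag : ∀ M : Matrix (V n) (V n) ℝ, ((M, M) : TT n) ∈ (phiA n).range := by
    intro M
    have hM : M ∈ Algebra.adjoin ℝ (Gens n) := by
      rw [adjoin_gens_eq_top]; trivial
    have hmap : ((M, M) : TT n) ∈ Subalgebra.map
        ((AlgHom.id ℝ (Matrix (V n) (V n) ℝ)).prod (AlgHom.id ℝ (Matrix (V n) (V n) ℝ)))
        (Algebra.adjoin ℝ (Gens n)) := ⟨M, hM, rfl⟩
    rw [AlgHom.map_adjoin] at hmap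
    refine Algebra.adjoin_le ?_ hmap
    rintro _ ⟨x, hx, rfl⟩
    rcases hx with ⟨k, rfl⟩ | ⟨k, rfl⟩
    · exact hXk k
    · exact hZk k
  have e1 : ((1, -1) : TT n) ∈ (phiA n).range := by
    refine ⟨g n ⟨2 * n, by omega⟩, ?_⟩
    show phiA n _ = _
    rw [phiA_g, genT_last]
  have p1 : ((1, 0) : TT n) ∈ (phiA n).range := by
    have key : ((1, 0) : TT n) = (1/2 : ℝ) • ((1 : TT n) + (1, -1)) := by
      have h1 : (1 : TT n) = ((1 : Matrix (V n) (V n) ℝ), (1 : Matrix (V n) (V n) ℝ)) := rfl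
      rw [h1, Prod.mk_add_mk, Prod.smul_mk, add_neg_cancel, smul_zero]
      have h2 : (1 : Matrix (V n) (V n) ℝ) + 1 = (2 : ℝ) • 1 := by
        rw [two_smul]
      rw [h2, smul_smul]
      norm_num
    rw [key]
    exact Subalgebra.smul_mem _ (Subalgebra.add_mem _ (Subalgebra.one_mem _) e1) _
  have p2 : ((0, 1) : TT n) ∈ (phiA n).range := by
    have key : ((0, 1) : TT n) = (1 : TT n) - (1, 0) := by
      have h1 : (1 : TT n) = ((1 : Matrix (V n) (V n) ℝ), (1 : Matrix (V n) (V n) ℝ)) := rfl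
      rw [h1, Prod.mk_sub_mk, sub_self, sub_zero]
    rw [key]
    exact Subalgebra.sub_mem _ (Subalgebra.one_mem _) p1
  rintro ⟨M, N⟩ -
  have key : ((M, N) : TT n) = (M, M) * (1, 0) + (N, N) * (0, 1) := by
    rw [Prod.mk_mul_mk, Prod.mk_mul_mk, Prod.mk_add_mk, mul_one, mul_zero, mul_zero,
      mul_one, add_zero, zero_add]
  rw [key]
  exact Subalgebra.add_mem _
    (Subalgebra.mul_mem _ (hdiag M) p1) (Subalgebra.mul_mem _ (hdiag N) p2)

lemma phiA_injective : Function.Injective (phiA n) := by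
  have hsur := phiA_surjective (n := n)
  set f := (phiA n).toLinearMap with hf
  have hrange : LinearMap.range f = ⊤ := LinearMap.range_eq_top.mpr hsur
  have hrank := LinearMap.finrank_range_add_finrank_ker f
  rw [hrange, finrank_top] at hrank
  have hle := finrank_le (n := n)
  have hTT := finrank_TT (n := n)
  have hker : Module.finrank ℝ (LinearMap.ker f) = 0 := by omega
  have : LinearMap.ker f = ⊥ := Submodule.finrank_eq_zero.mp hker
  exact LinearMap.ker_eq_bot.mp this

noncomputable def equiv1 (n : ℕ) : RingQuot (Rel12 n) ≃ₐ[ℝ] TT n :=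
  AlgEquiv.ofBijective (phiA n) ⟨phiA_injective, phiA_surjective⟩

noncomputable def prodCongrA {A B C D : Type*} [Semiring A] [Semiring B] [Semiring C]
    [Semiring D] [Algebra ℝ A] [Algebra ℝ B] [Algebra ℝ C] [Algebra ℝ D]
    (e1 : A ≃ₐ[ℝ] B) (e2 : C ≃ₐ[ℝ] D) : (A × C) ≃ₐ[ℝ] (B × D) :=
  AlgEquiv.ofAlgHom
    ((e1.toAlgHom.comp (AlgHom.fst ℝ A C)).prod (e2.toAlgHom.comp (AlgHom.snd ℝ A C)))
    ((e1.symm.toAlgHom.comp (AlgHom.fst ℝ B D)).prod (e2.symm.toAlgHom.comp (AlgHom.snd ℝ B D)))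
    (by
      apply AlgHom.ext
      intro x
      show ((e1 (e1.symm x.1), e2 (e2.symm x.2)) : B × D) = x
      simp)
    (by
      apply AlgHom.ext
      intro x
      show ((e1.symm (e1 x.1), e2.symm (e2 x.2)) : A × C) = x
      simp)

noncomputable def eV (n : ℕ) : V n ≃ Fin (2 ^ n) :=
  (Equiv.arrowCongr (Equiv.refl (Fin n)) finTwoEquiv.symm).trans finFunctionFinEquiv

noncomputable def eM (n : ℕ) :
    Matrix (V n) (V n) ℝ ≃ₐ[ℝ] Matrix (Fin (2 ^ n)) (Fin (2 ^ n)) ℝ :=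
  Matrix.reindexAlgEquiv ℝ ℝ (eV n)

end Tw12

theorem twisted_mu0_odd_iso_prod_matrix_real (n : ℕ) :
    Nonempty (RingQuot (Rel12 n) ≃ₐ[ℝ]
      (Matrix (Fin (2 ^ n)) (Fin (2 ^ n)) ℝ × Matrix (Fin (2 ^ n)) (Fin (2 ^ n)) ℝ)) :=
  ⟨(Tw12.equiv1 n).trans (Tw12.prodCongrA (Tw12.eM n) (Tw12.eM n))⟩
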